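/- Let η ∈ (0,1) and for integers b ≥ 2 set μ_η(b) = Σ_{2 ≤ k ≤ ηb} (k−1) C(b,k) λ_{b,k}. Then for every integer b ≥ 2 one has μ(b) − μ_η(b) ≤ (b−1) Λ([0,1]) / η, where μ(b) = Σ_{k=2}^{b} (k−1) C(b,k) λ_{b,k}. Moreover, if ∫_{[0,1]} p^{−1} Λ(dp) = ∞ (no dust component), then μ_η(b)/μ(b) → 1 as b → ∞. -/

import Mathlib

open MeasureTheory Real Set Filter Topology

/-- The merging rate `λ_{b,k} = ∫_{[0,1]} p^{k−2} (1−p)^{b−k} Λ(dp)`. -/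
noncomputable def lamBK (Λ : Measure ℝ) (b k : ℕ) : ℝ :=
  ∫ p in Set.Icc (0:ℝ) 1, p ^ ((k : ℝ) - 2) * (1 - p) ^ ((b : ℝ) - (k : ℝ)) ∂Λ

/-- `μ(b) = Σ_{k=2}^{b} (k−1) C(b,k) λ_{b,k}`, the total rate of decrease. -/
noncomputable def muD (Λ : Measure ℝ) (b : ℕ) : ℝ :=
  ∑ k ∈ Finset.Icc 2 b, ((k : ℝ) - 1) * (b.choose k : ℝ) * lamBK Λ b k

/-- `μ_η(b) = Σ_{2 ≤ k ≤ ηb} (k−1) C(b,k) λ_{b,k}`, the truncated rate of decrease. -/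
noncomputable def muEta (Λ : Measure ℝ) (η : ℝ) (b : ℕ) : ℝ :=
  ∑ k ∈ (Finset.Icc 2 b).filter (fun k : ℕ => (k : ℝ) ≤ η * (b : ℝ)),
    ((k : ℝ) - 1) * (b.choose k : ℝ) * lamBK Λ b k

lemma my_choose_id (b j : ℕ) (h : j + 2 ≤ b) :
    ((j+2) * (j+1)) * b.choose (j+2) = (b * (b-1)) * ((b-2).choose j) := by
  have h1 : b * (b-1).choose (j+1) = b.choose (j+2) * (j+2) := by
    have := Nat.add_one_mul_choose_eq (b-1) (j+1)
    rwa [Nat.sub_add_cancel (by omega)] at this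
  have h2 : (b-1) * (b-2).choose j = (b-1).choose (j+1) * (j+1) := by
    have := Nat.add_one_mul_choose_eq (b-2) j
    rwa [show b-2+1 = b-1 by omega] at this
  calc ((j+2)*(j+1)) * b.choose (j+2) = (j+1) * (b.choose (j+2) * (j+2)) := by ring
    _ = (j+1) * (b * (b-1).choose (j+1)) := by rw [← h1]
    _ = b * ((b-1).choose (j+1) * (j+1)) := by ring
    _ = b * ((b-1) * (b-2).choose j) := by rw [← h2]
    _ = (b * (b-1)) * ((b-2).choose j) := by ring

lemma my_choose_two (b : ℕ) (hb : 2 ≤ b) : (b.choose 2 : ℝ) = (b:ℝ) * ((b:ℝ)-1) / 2 := by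
  have h1 : b * (b-1).choose 1 = b.choose 2 * 2 := by
    have := Nat.add_one_mul_choose_eq (b-1) 1
    rwa [Nat.sub_add_cancel (by omega)] at this
  rw [Nat.choose_one_right] at h1
  have : ((b * (b-1) : ℕ) : ℝ) = ((b.choose 2 * 2 : ℕ) : ℝ) := by rw [h1]
  push_cast [Nat.cast_sub (by omega : 1 ≤ b)] at this
  linarith

lemma my_sum_second (b : ℕ) (hb : 2 ≤ b) (x y : ℝ) :
    ∑ k ∈ Finset.Icc 2 b, (k:ℝ) * ((k:ℝ)-1) * (b.choose k : ℝ) * (x^(k-2) * y^(b-k))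
      = (b:ℝ) * ((b:ℝ)-1) * (x+y)^(b-2) := by
  rw [← Finset.Ico_add_one_right_eq_Icc, Finset.sum_Ico_eq_sum_range]
  have hbp : b + 1 - 2 = b - 1 := by omega
  rw [hbp, add_pow, Finset.mul_sum]
  rw [show b - 2 + 1 = b - 1 by omega]
  refine Finset.sum_congr rfl fun j hj => ?_
  have hj' : j + 2 ≤ b := by
    have := Finset.mem_range.mp hj; omega
  have key := my_choose_id b j hj'
  have keyR : ((j:ℝ)+2) * ((j:ℝ)+1) * (b.choose (j+2) : ℝ)
      = (b:ℝ) * ((b:ℝ)-1) * ((b-2).choose j : ℝ) := by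
    have := congrArg (fun n : ℕ => (n:ℝ)) key
    push_cast [Nat.cast_sub (by omega : 1 ≤ b)] at this
    linarith
  have e1 : 2 + j - 2 = j := by omega
  have e2 : b - (2 + j) = b - 2 - j := by omega
  rw [e1, e2]
  push_cast
  calc ((2:ℝ)+j) * ((2+j)-1) * (b.choose (2+j) : ℝ) * (x^j * y^(b-2-j))
      = (((j:ℝ)+2) * ((j:ℝ)+1) * (b.choose (j+2) : ℝ)) * (x^j * y^(b-2-j)) := by
        rw [show 2+j = j+2 from by omega]; ring
    _ = ((b:ℝ) * ((b:ℝ)-1) * ((b-2).choose j : ℝ)) * (x^j * y^(b-2-j)) := by rw [keyR]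
    _ = (b:ℝ) * ((b:ℝ)-1) * (x^j * y^(b-2-j) * ((b-2).choose j : ℝ)) := by ring

lemma my_sum_first (b : ℕ) (hb : 2 ≤ b) (p : ℝ) :
    ∑ k ∈ Finset.Icc 2 b, ((k:ℝ)-1) * (b.choose k : ℝ) * (p^k * (1-p)^(b-k))
      = (b:ℝ) * p - 1 + (1-p)^b := by
  set B : ℕ → ℝ := fun k => ((k:ℝ)-1) * (b.choose k : ℝ) * (p^k * (1-p)^(b-k)) with hB
  have h1 : ∑ ν ∈ Finset.range (b+1), (b.choose ν : ℝ) * (p^ν * (1-p)^(b-ν)) = 1 := by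
    have := congrArg (Polynomial.eval p) (bernsteinPolynomial.sum ℝ b)
    rw [Polynomial.eval_finset_sum] at this
    simp only [bernsteinPolynomial, Polynomial.eval_mul, Polynomial.eval_pow,
      Polynomial.eval_sub, Polynomial.eval_one, Polynomial.eval_X,
      Polynomial.eval_natCast, Polynomial.eval_one] at this
    calc ∑ ν ∈ Finset.range (b+1), (b.choose ν : ℝ) * (p^ν * (1-p)^(b-ν))
        = ∑ ν ∈ Finset.range (b+1), (b.choose ν : ℝ) * p ^ ν * (1 - p) ^ (b - ν) := by
          refine Finset.sum_congr rfl fun ν _ => by ring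
      _ = 1 := this
  have h2 : ∑ ν ∈ Finset.range (b+1), (ν:ℝ) * ((b.choose ν : ℝ) * (p^ν * (1-p)^(b-ν))) = (b:ℝ) * p := by
    have := congrArg (Polynomial.eval p) (bernsteinPolynomial.sum_smul ℝ b)
    rw [Polynomial.eval_finset_sum] at this
    simp only [bernsteinPolynomial, Polynomial.eval_smul, Polynomial.eval_mul, Polynomial.eval_pow,
      Polynomial.eval_sub, Polynomial.eval_one, Polynomial.eval_X,
      Polynomial.eval_natCast, nsmul_eq_mul] at this
    calc ∑ ν ∈ Finset.range (b+1), (ν:ℝ) * ((b.choose ν : ℝ) * (p^ν * (1-p)^(b-ν)))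
        = ∑ ν ∈ Finset.range (b+1), (ν:ℝ) * ((b.choose ν : ℝ) * p ^ ν * (1 - p) ^ (b - ν)) := by
          refine Finset.sum_congr rfl fun ν _ => by ring
      _ = (b:ℝ) * p := this
  have htot : ∑ ν ∈ Finset.range (b+1), B ν = (b:ℝ) * p - 1 := by
    have : ∑ ν ∈ Finset.range (b+1), B ν
        = ∑ ν ∈ Finset.range (b+1), ((ν:ℝ) * ((b.choose ν : ℝ) * (p^ν * (1-p)^(b-ν)))
            - (b.choose ν : ℝ) * (p^ν * (1-p)^(b-ν))) := by
      refine Finset.sum_congr rfl fun ν _ => by simp only [hB]; ring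
    rw [this, Finset.sum_sub_distrib, h1, h2]
  have hsplit : ∑ ν ∈ Finset.range 2, B ν + ∑ ν ∈ Finset.Ico 2 (b+1), B ν
      = ∑ ν ∈ Finset.range (b+1), B ν := by
    rw [Finset.range_eq_Ico, Finset.range_eq_Ico]
    exact Finset.sum_Ico_consecutive B (by omega : 0 ≤ 2) (by omega : 2 ≤ b + 1)
  have h01 : ∑ ν ∈ Finset.range 2, B ν = -(1-p)^b := by
    rw [Finset.sum_range_succ, Finset.sum_range_one]
    simp [hB]
  rw [← Finset.Ico_add_one_right_eq_Icc]
  have := hsplit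
  rw [h01, htot] at this
  linarith

lemma my_integrand_eq (b k : ℕ) (h2 : 2 ≤ k) (hk : k ≤ b) (p : ℝ) :
    p ^ ((k : ℝ) - 2) * (1 - p) ^ ((b : ℝ) - (k : ℝ)) = p^(k-2) * (1-p)^(b-k) := by
  rw [show (k:ℝ) - 2 = ((k-2:ℕ):ℝ) by rw [Nat.cast_sub h2]; norm_num,
    show (b:ℝ) - (k:ℝ) = ((b-k:ℕ):ℝ) by rw [Nat.cast_sub hk],
    Real.rpow_natCast, Real.rpow_natCast]

lemma my_lamBK_eq (Λ : Measure ℝ) (b k : ℕ) (h2 : 2 ≤ k) (hk : k ≤ b) :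
    lamBK Λ b k = ∫ p in Set.Icc (0:ℝ) 1, (p^(k-2) * (1-p)^(b-k)) ∂Λ := by
  unfold lamBK
  exact integral_congr_ae (Filter.Eventually.of_forall fun p => my_integrand_eq b k h2 hk p)

lemma my_cont (b k : ℕ) : Continuous (fun p : ℝ => p^(k-2) * (1-p)^(b-k)) := by fun_prop

lemma my_intOn (Λ : Measure ℝ) [IsFiniteMeasure Λ] (b k : ℕ) :
    IntegrableOn (fun p : ℝ => p^(k-2) * (1-p)^(b-k)) (Set.Icc 0 1) Λ :=
  (my_cont b k).continuousOn.integrableOn_compact isCompact_Icc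

lemma my_lamBK_nonneg (Λ : Measure ℝ) (b k : ℕ) : 0 ≤ lamBK Λ b k := by
  refine setIntegral_nonneg measurableSet_Icc fun p hp => ?_
  exact mul_nonneg (Real.rpow_nonneg hp.1 _) (Real.rpow_nonneg (by linarith [hp.2]) _)

lemma my_pointwise (b : ℕ) (hb : 2 ≤ b) (η : ℝ) (hη0 : 0 < η) (p : ℝ) (hp : p ∈ Set.Icc (0:ℝ) 1) :
    ∑ k ∈ (Finset.Icc 2 b).filter (fun k : ℕ => ¬ ((k : ℝ) ≤ η * (b : ℝ))),
      ((k:ℝ)-1) * (b.choose k : ℝ) * (p^(k-2) * (1-p)^(b-k)) ≤ ((b:ℝ)-1)/η := by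
  have hbR : (2:ℝ) ≤ (b:ℝ) := by exact_mod_cast hb
  have hb0 : (0:ℝ) < η * b := by positivity
  have hterm : ∀ k ∈ (Finset.Icc 2 b).filter (fun k : ℕ => ¬ ((k : ℝ) ≤ η * (b : ℝ))),
      ((k:ℝ)-1) * (b.choose k : ℝ) * (p^(k-2) * (1-p)^(b-k))
        ≤ (1/(η*b)) * ((k:ℝ) * ((k:ℝ)-1) * (b.choose k : ℝ) * (p^(k-2) * (1-p)^(b-k))) := by
    intro k hk
    obtain ⟨hk1, hk2⟩ := Finset.mem_filter.mp hk
    have hk2' : η * b < k := not_le.mp hk2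
    have hkI := Finset.mem_Icc.mp hk1
    have hk2R : (2:ℝ) ≤ (k:ℝ) := by exact_mod_cast hkI.1
    have h1 : (0:ℝ) ≤ p := hp.1
    have h2 : (0:ℝ) ≤ 1 - p := by linarith [hp.2]
    have hnn : (0:ℝ) ≤ ((k:ℝ)-1) * (b.choose k : ℝ) * (p^(k-2) * (1-p)^(b-k)) :=
      mul_nonneg (mul_nonneg (by linarith) (Nat.cast_nonneg _))
        (mul_nonneg (pow_nonneg h1 _) (pow_nonneg h2 _))
    have hfac : (1:ℝ) ≤ (1/(η*b)) * k := by
      rw [one_div, inv_mul_eq_div, le_div_iff₀ hb0]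
      linarith
    calc ((k:ℝ)-1) * (b.choose k : ℝ) * (p^(k-2) * (1-p)^(b-k))
        = 1 * (((k:ℝ)-1) * (b.choose k : ℝ) * (p^(k-2) * (1-p)^(b-k))) := by ring
      _ ≤ ((1/(η*b)) * k) * (((k:ℝ)-1) * (b.choose k : ℝ) * (p^(k-2) * (1-p)^(b-k))) :=
          mul_le_mul_of_nonneg_right hfac hnn
      _ = (1/(η*b)) * ((k:ℝ) * ((k:ℝ)-1) * (b.choose k : ℝ) * (p^(k-2) * (1-p)^(b-k))) := by ring
  calc ∑ k ∈ (Finset.Icc 2 b).filter (fun k : ℕ => ¬ ((k : ℝ) ≤ η * (b : ℝ))),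
        ((k:ℝ)-1) * (b.choose k : ℝ) * (p^(k-2) * (1-p)^(b-k))
      ≤ ∑ k ∈ (Finset.Icc 2 b).filter (fun k : ℕ => ¬ ((k : ℝ) ≤ η * (b : ℝ))),
        (1/(η*b)) * ((k:ℝ) * ((k:ℝ)-1) * (b.choose k : ℝ) * (p^(k-2) * (1-p)^(b-k))) :=
      Finset.sum_le_sum hterm
    _ ≤ ∑ k ∈ Finset.Icc 2 b,
        (1/(η*b)) * ((k:ℝ) * ((k:ℝ)-1) * (b.choose k : ℝ) * (p^(k-2) * (1-p)^(b-k))) := by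
      refine Finset.sum_le_sum_of_subset_of_nonneg (Finset.filter_subset _ _) ?_
      intro k hk _
      have hkI := Finset.mem_Icc.mp hk
      have hk2R : (2:ℝ) ≤ (k:ℝ) := by exact_mod_cast hkI.1
      have h1 : (0:ℝ) ≤ p := hp.1
      have h2 : (0:ℝ) ≤ 1 - p := by linarith [hp.2]
      have h3 : (0:ℝ) < 1/(η*b) := by positivity
      refine mul_nonneg h3.le (mul_nonneg (mul_nonneg (mul_nonneg (by linarith) (by linarith))
        (Nat.cast_nonneg _)) (mul_nonneg (pow_nonneg h1 _) (pow_nonneg h2 _)))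
    _ = (1/(η*b)) * ((b:ℝ) * ((b:ℝ)-1) * (p + (1-p))^(b-2)) := by
      rw [← Finset.mul_sum, my_sum_second b hb]
    _ = ((b:ℝ)-1)/η := by
      have hbpos : (0:ℝ) < b := by linarith
      rw [show p + (1-p) = 1 by ring, one_pow]
      field_simp

lemma my_part1 (Λ : Measure ℝ) [IsFiniteMeasure Λ] (η : ℝ) (hη0 : 0 < η)
    (b : ℕ) (hb : 2 ≤ b) :
    muD Λ b - muEta Λ η b ≤ ((b : ℝ) - 1) * (Λ (Set.Icc (0:ℝ) 1)).toReal / η := by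
  set S := (Finset.Icc 2 b).filter (fun k : ℕ => ¬ ((k : ℝ) ≤ η * (b : ℝ))) with hS
  have hsplit : muEta Λ η b + ∑ k ∈ S, ((k : ℝ) - 1) * (b.choose k : ℝ) * lamBK Λ b k
      = muD Λ b :=
    Finset.sum_filter_add_sum_filter_not (Finset.Icc 2 b) _ _
  have hterm : ∀ k ∈ S, ((k : ℝ) - 1) * (b.choose k : ℝ) * lamBK Λ b k
      = ∫ p in Set.Icc (0:ℝ) 1,
          ((k:ℝ)-1) * (b.choose k : ℝ) * (p^(k-2) * (1-p)^(b-k)) ∂Λ := by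
    intro k hk
    have hkI := Finset.mem_Icc.mp (Finset.mem_filter.mp hk).1
    rw [my_lamBK_eq Λ b k hkI.1 hkI.2, ← integral_const_mul]
  have hsum : ∑ k ∈ S, ((k : ℝ) - 1) * (b.choose k : ℝ) * lamBK Λ b k
      = ∫ p in Set.Icc (0:ℝ) 1,
          (∑ k ∈ S, ((k:ℝ)-1) * (b.choose k : ℝ) * (p^(k-2) * (1-p)^(b-k))) ∂Λ := by
    rw [Finset.sum_congr rfl hterm]
    exact (integral_finset_sum S fun k _ => (my_intOn Λ b k).const_mul _).symm
  have hbound : (∫ p in Set.Icc (0:ℝ) 1,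
        (∑ k ∈ S, ((k:ℝ)-1) * (b.choose k : ℝ) * (p^(k-2) * (1-p)^(b-k))) ∂Λ)
      ≤ ∫ _ in Set.Icc (0:ℝ) 1, (((b:ℝ)-1)/η) ∂Λ := by
    refine setIntegral_mono_on (integrable_finset_sum S fun k _ => (my_intOn Λ b k).const_mul _)
      ((integrableOn_const_iff (C := ((b:ℝ)-1)/η)).mpr (Or.inr ?_)) measurableSet_Icc
      (fun p hp => my_pointwise b hb η hη0 p hp)
    exact measure_lt_top Λ _
  have hconst : (∫ _ in Set.Icc (0:ℝ) 1, (((b:ℝ)-1)/η) ∂Λ)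
      = ((b : ℝ) - 1) * (Λ (Set.Icc (0:ℝ) 1)).toReal / η := by
    rw [setIntegral_const, smul_eq_mul, measureReal_def]; ring
  have : muD Λ b - muEta Λ η b
      = ∑ k ∈ S, ((k : ℝ) - 1) * (b.choose k : ℝ) * lamBK Λ b k := by linarith
  rw [this, hsum]
  exact hbound.trans (le_of_eq hconst)

noncomputable def GG (b : ℕ) (p : ℝ) : ℝ :=
  ∑ k ∈ Finset.Icc 2 b, ((k:ℝ)-1) * (b.choose k : ℝ) * (p^(k-2) * (1-p)^(b-k))
lemma my_G_cont (b : ℕ) : Continuous (GG b) := by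
  unfold GG
  exact continuous_finset_sum _ fun k _ => by fun_prop

lemma my_G_nonneg (b : ℕ) (p : ℝ) (hp : p ∈ Set.Icc (0:ℝ) 1) : 0 ≤ GG b p := by
  refine Finset.sum_nonneg fun k hk => ?_
  have hkI := Finset.mem_Icc.mp hk
  have : (2:ℝ) ≤ (k:ℝ) := by exact_mod_cast hkI.1
  exact mul_nonneg (mul_nonneg (by linarith) (Nat.cast_nonneg _))
    (mul_nonneg (pow_nonneg hp.1 _) (pow_nonneg (by linarith [hp.2]) _))

lemma my_G_sq (b : ℕ) (hb : 2 ≤ b) (p : ℝ) :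
    p^2 * GG b p = (b:ℝ) * p - 1 + (1-p)^b := by
  unfold GG
  rw [Finset.mul_sum, ← my_sum_first b hb p]
  refine Finset.sum_congr rfl fun k hk => ?_
  have hkI := Finset.mem_Icc.mp hk
  have : p^2 * p^(k-2) = p^k := by
    rw [← pow_add]
    congr 1
    omega
  calc p^2 * (((k:ℝ)-1) * (b.choose k : ℝ) * (p^(k-2) * (1-p)^(b-k)))
      = ((k:ℝ)-1) * (b.choose k : ℝ) * ((p^2 * p^(k-2)) * (1-p)^(b-k)) := by ring
    _ = ((k:ℝ)-1) * (b.choose k : ℝ) * (p^k * (1-p)^(b-k)) := by rw [this]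

lemma my_G_zero (b : ℕ) (hb : 2 ≤ b) : GG b 0 = (b:ℝ) * ((b:ℝ)-1) / 2 := by
  unfold GG
  rw [Finset.sum_eq_single 2]
  · rw [my_choose_two b hb]; norm_num
  · intro k hk hne
    have hkI := Finset.mem_Icc.mp hk
    have : k - 2 ≠ 0 := by omega
    simp [zero_pow this]
  · intro h
    exact absurd (Finset.mem_Icc.mpr ⟨le_refl 2, hb⟩) h

lemma my_liminf (p : ℝ) (hp : p ∈ Set.Icc (0:ℝ) 1) :
    (ENNReal.ofReal p)⁻¹ ≤ Filter.liminf (fun b : ℕ => ENNReal.ofReal (GG b p / b)) atTop := by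
  rcases eq_or_lt_of_le hp.1 with h0 | h0
  · -- p = 0
    have htt : Tendsto (fun b : ℕ => GG b p / b) atTop atTop := by
      have h1 : Tendsto (fun b : ℕ => ((b:ℝ)-1)/2) atTop atTop :=
        (tendsto_atTop_add_const_right atTop (-1 : ℝ) tendsto_natCast_atTop_atTop).atTop_div_const
          (by norm_num)
      refine Tendsto.congr' ?_ h1
      filter_upwards [eventually_ge_atTop 2] with b hb
      have hbne : (b:ℝ) ≠ 0 := by positivity
      rw [← h0, my_G_zero b hb]
      field_simp
    have : Tendsto (fun b : ℕ => ENNReal.ofReal (GG b p / b)) atTop (𝓝 ⊤) :=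
      ENNReal.tendsto_ofReal_atTop.comp htt
    rw [this.liminf_eq]
    exact le_top
  · -- p > 0
    have hp1 := hp.2
    have hq0 : (0:ℝ) ≤ 1 - p := by linarith
    have hq1 : 1 - p < 1 := by linarith
    have hqlim : Tendsto (fun b : ℕ => (1-p)^b) atTop (𝓝 0) :=
      tendsto_pow_atTop_nhds_zero_of_lt_one hq0 hq1
    have hmain : Tendsto (fun b : ℕ => GG b p / b) atTop (𝓝 (1/p)) := by
      have haux : Tendsto (fun b : ℕ => (p + ((1-p)^b - 1) * (1/(b:ℝ))) / p^2) atTop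
          (𝓝 (1/p)) := by
        have h1 : Tendsto (fun b : ℕ => p + ((1-p)^b - 1) * (1/(b:ℝ))) atTop (𝓝 (p + 0)) := by
          refine tendsto_const_nhds.add ?_
          have := ((hqlim.sub_const 1).mul tendsto_one_div_atTop_nhds_zero_nat)
          simpa using this
        have := h1.div_const (p^2)
        rw [add_zero] at this
        convert this using 2
        field_simp
      refine Tendsto.congr' ?_ haux
      filter_upwards [eventually_ge_atTop 2] with b hb
      have hbne : (b:ℝ) ≠ 0 := by positivity
      have hpne : p ≠ 0 := ne_of_gt h0
      have hsq := my_G_sq b hb p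
      field_simp
      nlinarith [hsq]
    have : Tendsto (fun b : ℕ => ENNReal.ofReal (GG b p / b)) atTop
        (𝓝 (ENNReal.ofReal (1/p))) := ENNReal.tendsto_ofReal hmain
    rw [this.liminf_eq, one_div, ENNReal.ofReal_inv_of_pos h0]

lemma my_G_intOn (Λ : Measure ℝ) [IsFiniteMeasure Λ] (b : ℕ) :
    IntegrableOn (GG b) (Set.Icc (0:ℝ) 1) Λ :=
  integrable_finset_sum _ fun k _ => (my_intOn Λ b k).const_mul _

lemma my_muD_eq (Λ : Measure ℝ) [IsFiniteMeasure Λ] (b : ℕ) :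
    muD Λ b = ∫ p in Set.Icc (0:ℝ) 1, GG b p ∂Λ := by
  unfold muD GG
  rw [integral_finset_sum _ (fun k _ => ((my_intOn Λ b k).const_mul _))]
  refine Finset.sum_congr rfl fun k hk => ?_
  have hkI := Finset.mem_Icc.mp hk
  rw [my_lamBK_eq Λ b k hkI.1 hkI.2, ← integral_const_mul]

lemma my_muD_atTop (Λ : Measure ℝ) [IsFiniteMeasure Λ]
    (hdust : ∫⁻ p in Set.Icc (0:ℝ) 1, (ENNReal.ofReal p)⁻¹ ∂Λ = ⊤) :
    Tendsto (fun b : ℕ => muD Λ b / b) atTop atTop := by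
  have meas : ∀ b : ℕ, Measurable (fun p : ℝ => ENNReal.ofReal (GG b p / b)) := fun b =>
    ENNReal.measurable_ofReal.comp ((my_G_cont b).measurable.div_const _)
  have eqb : ∀ b : ℕ, (∫⁻ p in Set.Icc (0:ℝ) 1, ENNReal.ofReal (GG b p / b) ∂Λ)
      = ENNReal.ofReal (muD Λ b / b) := by
    intro b
    have hInt : Integrable (fun p => GG b p / (b:ℝ)) (Λ.restrict (Set.Icc 0 1)) :=
      (my_G_intOn Λ b).div_const _
    have hae : 0 ≤ᵐ[Λ.restrict (Set.Icc 0 1)] fun p => GG b p / (b:ℝ) := by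
      refine (ae_restrict_iff' measurableSet_Icc).mpr (Eventually.of_forall fun p hp => ?_)
      exact div_nonneg (my_G_nonneg b p hp) (Nat.cast_nonneg b)
    rw [← ofReal_integral_eq_lintegral_ofReal hInt hae]
    congr 1
    rw [integral_div, ← my_muD_eq Λ b]
  have h1 : (∫⁻ p in Set.Icc (0:ℝ) 1, (ENNReal.ofReal p)⁻¹ ∂Λ)
      ≤ ∫⁻ p in Set.Icc (0:ℝ) 1,
          Filter.liminf (fun b : ℕ => ENNReal.ofReal (GG b p / b)) atTop ∂Λ := by
    refine lintegral_mono_ae ?_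
    exact (ae_restrict_iff' measurableSet_Icc).mpr (Eventually.of_forall fun p hp =>
      my_liminf p hp)
  have h2 := lintegral_liminf_le (u := atTop) (μ := Λ.restrict (Set.Icc (0:ℝ) 1)) meas
  have htop : Filter.liminf (fun b : ℕ => ENNReal.ofReal (muD Λ b / b)) atTop = ⊤ := by
    refine top_le_iff.mp ?_
    have h3 := h1.trans h2
    rw [hdust] at h3
    simp_rw [eqb] at h3
    exact h3
  rw [tendsto_atTop]
  intro C
  have hlt : ENNReal.ofReal (max C 0 + 1)
      < Filter.liminf (fun b : ℕ => ENNReal.ofReal (muD Λ b / b)) atTop := by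
    rw [htop]; exact ENNReal.ofReal_lt_top
  have := eventually_lt_of_lt_liminf hlt
  filter_upwards [this] with b hb
  have hb' : max C 0 + 1 < muD Λ b / b := by
    by_contra hcon
    push_neg at hcon
    exact absurd (ENNReal.ofReal_le_ofReal hcon) (not_le.mpr hb)
  calc C ≤ max C 0 := le_max_left _ _
    _ ≤ muD Λ b / b := by linarith

/-- For `η ∈ (0,1)` and every integer `b ≥ 2`, `μ(b) − μ_η(b) ≤ (b−1) Λ([0,1]) / η`;
moreover, in the dustless case `μ_η(b)/μ(b) → 1` as `b → ∞`. -/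
theorem muEta_close_to_mu (Λ : Measure ℝ) [IsFiniteMeasure Λ] (hΛ : Λ ≠ 0)
    (hsupp : Λ (Set.Icc (0:ℝ) 1)ᶜ = 0) (η : ℝ) (hη0 : 0 < η) (hη1 : η < 1) :
    (∀ b : ℕ, 2 ≤ b →
      muD Λ b - muEta Λ η b ≤ ((b : ℝ) - 1) * (Λ (Set.Icc (0:ℝ) 1)).toReal / η) ∧
    ((∫⁻ p in Set.Icc (0:ℝ) 1, (ENNReal.ofReal p)⁻¹ ∂Λ = ⊤) →
      Tendsto (fun b : ℕ => muEta Λ η b / muD Λ b) atTop (𝓝 1)) := by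
  constructor
  · exact fun b hb => my_part1 Λ η hη0 b hb
  · intro hdust
    set K := (Λ (Set.Icc (0:ℝ) 1)).toReal with hK
    have hK0 : 0 ≤ K := ENNReal.toReal_nonneg
    have hT := my_muD_atTop Λ hdust
    have hpos : ∀ᶠ b : ℕ in atTop, 0 < muD Λ b := by
      filter_upwards [tendsto_atTop.mp hT 1, eventually_ge_atTop 1] with b h1 h2
      have hb0 : (0:ℝ) < b := by exact_mod_cast h2
      by_contra hcon
      push_neg at hcon
      have : muD Λ b / b ≤ 0 := div_nonpos_of_nonpos_of_nonneg hcon hb0.le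
      linarith
    have hdiff_nonneg : ∀ b : ℕ, 0 ≤ muD Λ b - muEta Λ η b := by
      intro b
      have hsplit : muEta Λ η b + ∑ k ∈ (Finset.Icc 2 b).filter
            (fun k : ℕ => ¬ ((k : ℝ) ≤ η * (b : ℝ))),
            ((k : ℝ) - 1) * (b.choose k : ℝ) * lamBK Λ b k = muD Λ b :=
        Finset.sum_filter_add_sum_filter_not (Finset.Icc 2 b) _ _
      have hnn : 0 ≤ ∑ k ∈ (Finset.Icc 2 b).filter
            (fun k : ℕ => ¬ ((k : ℝ) ≤ η * (b : ℝ))),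
            ((k : ℝ) - 1) * (b.choose k : ℝ) * lamBK Λ b k := by
        refine Finset.sum_nonneg fun k hk => ?_
        have hkI := Finset.mem_Icc.mp (Finset.mem_filter.mp hk).1
        have : (2:ℝ) ≤ (k:ℝ) := by exact_mod_cast hkI.1
        exact mul_nonneg (mul_nonneg (by linarith) (Nat.cast_nonneg _)) (my_lamBK_nonneg Λ b k)
      linarith
    have hU : Tendsto (fun b : ℕ => (K/η) * ((b:ℝ) / muD Λ b)) atTop (𝓝 0) := by
      have h1 : Tendsto (fun b : ℕ => (muD Λ b / (b:ℝ))⁻¹) atTop (𝓝 0) :=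
        hT.inv_tendsto_atTop
      have h2 : Tendsto (fun b : ℕ => (b:ℝ) / muD Λ b) atTop (𝓝 0) := by
        simpa [inv_div] using h1
      simpa using h2.const_mul (K/η)
    have hzero : Tendsto (fun b : ℕ => (muD Λ b - muEta Λ η b) / muD Λ b) atTop (𝓝 0) := by
      refine tendsto_of_tendsto_of_tendsto_of_le_of_le' tendsto_const_nhds hU ?_ ?_
      · filter_upwards [hpos] with b hb
        exact div_nonneg (hdiff_nonneg b) hb.le
      · filter_upwards [hpos, eventually_ge_atTop 2] with b hbpos hb2
        have hbR : (2:ℝ) ≤ (b:ℝ) := by exact_mod_cast hb2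
        have step1 : (muD Λ b - muEta Λ η b) / muD Λ b
            ≤ (((b:ℝ) - 1) * K / η) / muD Λ b := by
          gcongr
          exact my_part1 Λ η hη0 b hb2
        have step2 : (((b:ℝ) - 1) * K / η) / muD Λ b ≤ (K/η) * ((b:ℝ) / muD Λ b) := by
          rw [show (K/η) * ((b:ℝ) / muD Λ b) = ((b:ℝ) * K / η) / muD Λ b by ring]
          refine (div_le_div_iff_of_pos_right hbpos).mpr ?_
          refine (div_le_div_iff_of_pos_right hη0).mpr ?_
          exact mul_le_mul_of_nonneg_right (by linarith) hK0
        exact step1.trans step2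
    have hfinal : Tendsto (fun b : ℕ => 1 - (muD Λ b - muEta Λ η b) / muD Λ b) atTop (𝓝 1) := by
      have := hzero.const_sub 1
      simpa using this
    refine hfinal.congr' ?_
    filter_upwards [hpos] with b hb
    have hne : muD Λ b ≠ 0 := ne_of_gt hb
    field_simp
    ring
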